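/- Let Ω₁ be a 2×2 diagonal complex matrix and Ω₂ a 2×2 diagonal real matrix, both invertible, with |ω₁₁|·|ω₂₂| = |ω₁₂|·|ω₂₁|. Then there exists an invertible 2×2 complex matrix X not in 𝒢(2) such that both Xᴴ Ω₁ X̄ and Xᴴ Ω₂ X are diagonal. -/

import Mathlib

open Matrix Complex

/-- Membership in `𝒢(m)`: `X = D * P` with `D` invertible diagonal and `P` a
permutation matrix. -/
def inG (m : ℕ) (X : Matrix (Fin m) (Fin m) ℂ) : Prop :=
  ∃ (D : Matrix (Fin m) (Fin m) ℂ) (σ : Equiv.Perm (Fin m)),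
    D.IsDiag ∧ IsUnit D.det ∧ X = D * σ.permMatrix ℂ

/-- If `Ω₁` (complex diagonal) and `Ω₂` (real diagonal) are both
invertible and `|ω₁₁|·|ω₂₂| = |ω₁₂|·|ω₂₁|`, then there exists an invertible
`X ∉ 𝒢(2)` with both `Xᴴ Ω₁ X̄` and `Xᴴ Ω₂ X` diagonal. -/
theorem stmt_6 (ω₁ : Fin 2 → ℂ) (ω₂ : Fin 2 → ℝ)
    (h1 : ∀ k, ω₁ k ≠ 0) (h2 : ∀ k, ω₂ k ≠ 0)
    (h : ‖ω₁ 0‖ * |ω₂ 1| = ‖ω₁ 1‖ * |ω₂ 0|) :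
    ∃ X : Matrix (Fin 2) (Fin 2) ℂ, IsUnit X.det ∧ ¬ inG 2 X ∧
      (Xᴴ * Matrix.diagonal ω₁ * X.map (starRingEnd ℂ)).IsDiag ∧
      (Xᴴ * Matrix.diagonal (fun k => (ω₂ k : ℂ)) * X).IsDiag := by
  obtain ⟨b₀, hb₀⟩ := IsAlgClosed.exists_pow_nat_eq (ω₁ 0) (n := 2) two_pos
  obtain ⟨b₁, hb₁⟩ := IsAlgClosed.exists_pow_nat_eq (ω₁ 1) (n := 2) two_pos
  have hb₀0 : b₀ ≠ 0 := by intro hz; exact h1 0 (by rw [← hb₀, hz]; ring)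
  have hb₁0 : b₁ ≠ 0 := by intro hz; exact h1 1 (by rw [← hb₁, hz]; ring)
  set ε : ℝ := if 0 < ω₂ 0 * ω₂ 1 then 1 else -1 with hεdef
  set a : ℂ := if 0 < ω₂ 0 * ω₂ 1 then 2 else 2 * Complex.I with hadef
  have ha0 : a ≠ 0 := by
    rw [hadef]; split <;> simp [Complex.I_ne_zero]
  have hεa : (starRingEnd ℂ) a = (ε : ℂ) * a := by
    rw [hadef, hεdef]; split <;> simp [Complex.ext_iff]
  have haa4 : a * (starRingEnd ℂ) a = 4 := by
    rw [hadef]; split <;> simp [Complex.ext_iff] <;> ring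
  have hε2 : (ε : ℂ) * (ε : ℂ) = 1 := by
    rw [hεdef]; split <;> norm_num
  have hsgn : ε * ω₂ 0 * |ω₂ 1| = ω₂ 1 * |ω₂ 0| := by
    rw [hεdef]; split
    · rename_i hp
      rcases (mul_pos_iff.mp hp) with ⟨h0, h01⟩ | ⟨h0, h01⟩
      · rw [abs_of_pos h01, abs_of_pos h0]; ring
      · rw [abs_of_neg h01, abs_of_neg h0]; ring
    · rename_i hp
      have : ω₂ 0 * ω₂ 1 < 0 := lt_of_le_of_ne (not_lt.mp hp)
        (mul_ne_zero (h2 0) (h2 1))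
      rcases (mul_neg_iff.mp this) with ⟨h0, h01⟩ | ⟨h0, h01⟩ <;>
        [rw [abs_of_neg h01, abs_of_pos h0]; rw [abs_of_pos h01, abs_of_neg h0]] <;> ring
  -- key real identity
  have hA0 : (0:ℝ) < ‖ω₁ 0‖ := norm_pos_iff.mpr (h1 0)
  have hA1 : (0:ℝ) < ‖ω₁ 1‖ := norm_pos_iff.mpr (h1 1)
  have hw0 : |ω₂ 0| ≠ 0 := abs_ne_zero.mpr (h2 0)
  have hw1 : |ω₂ 1| ≠ 0 := abs_ne_zero.mpr (h2 1)
  have key : ε * ω₂ 0 * ‖ω₁ 1‖ = ω₂ 1 * ‖ω₁ 0‖ := by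
    have h' : ‖ω₁ 0‖ = ‖ω₁ 1‖ * |ω₂ 0| / |ω₂ 1| := by
      field_simp at h ⊢; linarith
    rw [h']
    field_simp
    linarith [hsgn]
  have hB0 : b₀ * (starRingEnd ℂ) b₀ = (‖ω₁ 0‖ : ℂ) := by
    rw [Complex.mul_conj]
    norm_cast
    rw [← hb₀, norm_pow, Complex.sq_norm]
  have hB1 : b₁ * (starRingEnd ℂ) b₁ = (‖ω₁ 1‖ : ℂ) := by
    rw [Complex.mul_conj]
    norm_cast
    rw [← hb₁, norm_pow, Complex.sq_norm]
  have hcb₀ : (starRingEnd ℂ) b₀ ≠ 0 := by simpa using hb₀0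
  have hcb₁ : (starRingEnd ℂ) b₁ ≠ 0 := by simpa using hb₁0
  set c0 : ℂ := (starRingEnd ℂ) b₀⁻¹ with hc0
  set c1 : ℂ := (starRingEnd ℂ) b₁⁻¹ with hc1
  have hc00 : c0 ≠ 0 := by simp [hc0, hb₀0]
  have hc10 : c1 ≠ 0 := by simp [hc1, hb₁0]
  have hε0 : (ε : ℂ) ≠ 0 := by
    intro hz; rw [hz, zero_mul] at hε2; exact one_ne_zero hε2.symm
  have hε1 : (ε : ℂ) = 1 ∨ (ε : ℂ) = -1 := by
    rw [hεdef]; split <;> norm_num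
  have hcc0 : (starRingEnd ℂ) c0 = b₀⁻¹ := by simp [hc0]
  have hcc1 : (starRingEnd ℂ) c1 = b₁⁻¹ := by simp [hc1]
  have R0 : (starRingEnd ℂ) c0 * (starRingEnd ℂ) c0 * ω₁ 0 = 1 := by
    rw [hcc0, ← hb₀]; field_simp
  have R1 : (starRingEnd ℂ) c1 * (starRingEnd ℂ) c1 * ω₁ 1 = 1 := by
    rw [hcc1, ← hb₁]; field_simp
  have S0 : c0 * (starRingEnd ℂ) c0 * (‖ω₁ 0‖ : ℂ) = 1 := by
    rw [hcc0, hc0, map_inv₀, ← hB0]; field_simp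
  have S1 : c1 * (starRingEnd ℂ) c1 * (‖ω₁ 1‖ : ℂ) = 1 := by
    rw [hcc1, hc1, map_inv₀, ← hB1]; field_simp
  have keyC : (ε:ℂ) * (ω₂ 0 : ℂ) * (‖ω₁ 1‖ : ℂ)
      = (ω₂ 1 : ℂ) * (‖ω₁ 0‖ : ℂ) := by
    exact_mod_cast congrArg (Complex.ofReal) key
  refine ⟨!![c0, -(ε:ℂ) * a * c0; (starRingEnd ℂ) a * c1, c1], ?_, ?_, ?_, ?_⟩
  · rw [Matrix.det_fin_two_of]
    apply isUnit_iff_ne_zero.mpr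
    have h4 : (1:ℂ) + (ε:ℂ) * 4 ≠ 0 := by
      rcases hε1 with hh | hh <;> rw [hh] <;> norm_num
    have factored : c0 * c1 - -(ε:ℂ) * a * c0 * ((starRingEnd ℂ) a * c1)
        = c0 * c1 * (1 + (ε:ℂ) * 4) := by
      linear_combination ((ε:ℂ) * c0 * c1) * haa4
    rw [factored]
    exact mul_ne_zero (mul_ne_zero hc00 hc10) h4
  · rintro ⟨D, σ, hD, -, hX⟩
    have hP : ∀ j, (!![c0, -(ε:ℂ) * a * c0; (starRingEnd ℂ) a * c1, c1]) 0 j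
        = D 0 0 * (σ.permMatrix ℂ) 0 j := by
      intro j
      rw [hX, Matrix.mul_apply, Fin.sum_univ_two,
        hD (show (0:Fin 2) ≠ 1 by decide)]
      ring
    have hent : ∀ i j : Fin 2, (σ.permMatrix ℂ) i j = if σ i = j then 1 else 0 := by
      intro i j
      simp [Equiv.Perm.permMatrix, PEquiv.toMatrix_apply, Equiv.toPEquiv_apply]
    have hP01 : (σ.permMatrix ℂ) 0 0 * (σ.permMatrix ℂ) 0 1 = 0 := by
      rw [hent, hent]
      rcases eq_or_ne (σ 0) 0 with hs | hs <;> simp [hs]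
    have hne : c0 * (-(ε:ℂ) * a * c0) ≠ 0 := by
      apply mul_ne_zero hc00
      exact mul_ne_zero (mul_ne_zero (neg_ne_zero.mpr hε0) ha0) hc00
    have E0 : (!![c0, -(ε:ℂ) * a * c0; (starRingEnd ℂ) a * c1, c1]) 0 0 = c0 := by simp
    have E1 : (!![c0, -(ε:ℂ) * a * c0; (starRingEnd ℂ) a * c1, c1]) 0 1
        = -(ε:ℂ) * a * c0 := by simp
    have q0 := hP 0
    have q1 := hP 1
    rw [E0] at q0
    rw [E1] at q1
    apply hne
    linear_combination (-(ε:ℂ) * a * c0) * q0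
      + (D 0 0 * (σ.permMatrix ℂ) 0 0) * q1 + (D 0 0 * D 0 0) * hP01
  · intro i j hij
    fin_cases i <;> fin_cases j <;>
      first
        | exact absurd rfl hij
        | · simp [Matrix.mul_apply, Fin.sum_univ_two, Matrix.diagonal,
              Matrix.conjTranspose_apply]
            linear_combination (-(ε:ℂ) * (starRingEnd ℂ) a) * R0 + a * R1
              - (ε:ℂ) * hεa - a * hε2
  · intro i j hij
    fin_cases i <;> fin_cases j <;>
      first
        | exact absurd rfl hij
        | · simp [Matrix.mul_apply, Fin.sum_univ_two, Matrix.diagonal,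
              Matrix.conjTranspose_apply]
            first
              | linear_combination
                  (-a * c0 * (starRingEnd ℂ) c0 * c1 * (starRingEnd ℂ) c1) * keyC
                  + ((ε:ℂ) * a * (ω₂ 0 : ℂ) * c0 * (starRingEnd ℂ) c0) * S1
                  + (-a * (ω₂ 1 : ℂ) * c1 * (starRingEnd ℂ) c1) * S0
              | linear_combination
                  (-(starRingEnd ℂ) a * c0 * (starRingEnd ℂ) c0 * c1 * (starRingEnd ℂ) c1) * keyC
                  + ((ε:ℂ) * (starRingEnd ℂ) a * (ω₂ 0 : ℂ) * c0 * (starRingEnd ℂ) c0) * S1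
                  + (-(starRingEnd ℂ) a * (ω₂ 1 : ℂ) * c1 * (starRingEnd ℂ) c1) * S0
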